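/- (Discrete Barbashin theorem) If there exists a constant B ≥ 1 such that Σ_{k=0}^{m} ‖(A_m^k)* x*‖ ≤ B ‖x*‖ for all m ∈ ℕ and x* ∈ X*, then the system is uniformly exponentially stable. -/

import Mathlib

open scoped BigOperators

/-- The evolution operator `A_m^n = A(m) ∘ ⋯ ∘ A(n+1)`, with `A_n^n = 1`. -/
noncomputable def evol {X : Type*} [NormedAddCommGroup X] [NormedSpace ℝ X]
    (A : ℕ → X →L[ℝ] X) (m n : ℕ) : X →L[ℝ] X :=
  ((List.range (m - n)).map (fun k => A (n + k + 1))).foldl (fun P B => B ∘L P) 1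

section aux
variable {X : Type*} [NormedAddCommGroup X] [NormedSpace ℝ X]

lemma evol_self (A : ℕ → X →L[ℝ] X) (n : ℕ) : evol A n n = 1 := by
  simp [evol]

lemma evol_succ (A : ℕ → X →L[ℝ] X) {n m : ℕ} (h : n ≤ m) :
    evol A (m + 1) n = A (m + 1) ∘L evol A m n := by
  unfold evol
  rw [show m + 1 - n = (m - n) + 1 by omega, List.range_succ, List.map_append,
    List.foldl_append]
  simp only [List.map_cons, List.map_nil, List.foldl_cons, List.foldl_nil]
  congr 2
  omega

lemma evol_comp (A : ℕ → X →L[ℝ] X) {n k m : ℕ} (hnk : n ≤ k) (hkm : k ≤ m) :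
    evol A m n = (evol A m k) ∘L (evol A k n) := by
  induction m, hkm using Nat.le_induction with
  | base =>
    rw [evol_self]
    exact (ContinuousLinearMap.id_comp _).symm
  | succ m hm ih =>
    rw [evol_succ A (hnk.trans hm), evol_succ A hm, ih, ContinuousLinearMap.comp_assoc]

lemma opNorm_le_of_dual (T : X →L[ℝ] X) (C : ℝ) (hC : 0 ≤ C)
    (h : ∀ xs : X →L[ℝ] ℝ, ‖xs.comp T‖ ≤ C * ‖xs‖) : ‖T‖ ≤ C := by
  refine T.opNorm_le_bound hC fun x => ?_
  by_cases hx : T x = 0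
  · rw [hx, norm_zero]; positivity
  · obtain ⟨g, hg1, hg2⟩ := exists_dual_vector ℝ (T x) (norm_ne_zero_iff.mpr hx)
    have hval : ‖T x‖ = g (T x) := by rw [hg2]; simp
    rw [hval]
    calc g (T x) = (g.comp T) x := rfl
      _ ≤ ‖(g.comp T) x‖ := le_abs_self _
      _ ≤ ‖g.comp T‖ * ‖x‖ := (g.comp T).le_opNorm x
      _ ≤ (C * ‖g‖) * ‖x‖ := mul_le_mul_of_nonneg_right (h g) (norm_nonneg x)
      _ = C * ‖x‖ := by rw [hg1, mul_one]

end aux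

theorem stmt5 {X : Type*} [NormedAddCommGroup X] [NormedSpace ℝ X] [CompleteSpace X]
    (A : ℕ → X →L[ℝ] X) (B : ℝ) (hB : 1 ≤ B)
    (h : ∀ m : ℕ, ∀ xs : X →L[ℝ] ℝ,
      ∑ k ∈ Finset.range (m + 1), ‖xs.comp (evol A m k)‖ ≤ B * ‖xs‖) :
    ∃ N α : ℝ, 1 ≤ N ∧ 0 < α ∧
      ∀ n m : ℕ, n ≤ m → ∀ x : X,
        ‖evol A m n x‖ ≤ N * Real.exp (-α * ((m : ℝ) - n)) * ‖x‖ := by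
  have hB0 : (0:ℝ) < B := lt_of_lt_of_le one_pos hB
  -- single-term bound
  have hsingle : ∀ m k : ℕ, k ≤ m → ∀ xs : X →L[ℝ] ℝ,
      ‖xs.comp (evol A m k)‖ ≤ B * ‖xs‖ := by
    intro m k hk xs
    refine le_trans ?_ (h m xs)
    exact Finset.single_le_sum (f := fun k => ‖xs.comp (evol A m k)‖)
      (fun i _ => norm_nonneg _) (Finset.mem_range.mpr (Nat.lt_succ_of_le hk))
  -- uniform bound on evol
  have hbound : ∀ m k : ℕ, k ≤ m → ‖evol A m k‖ ≤ B := by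
    intro m k hk
    exact opNorm_le_of_dual _ B hB0.le (hsingle m k hk)
  -- key decay: (m-n+1) * ‖xs ∘ evol A m n‖ ≤ B^2 ‖xs‖
  have hkey : ∀ n m : ℕ, n ≤ m → ∀ xs : X →L[ℝ] ℝ,
      ((m : ℝ) - n + 1) * ‖xs.comp (evol A m n)‖ ≤ B * B * ‖xs‖ := by
    intro n m hnm xs
    have hcard : ((Finset.Icc n m).card : ℝ) = (m : ℝ) - n + 1 := by
      rw [Nat.card_Icc, Nat.cast_sub (by omega)]
      push_cast; ring
    calc ((m : ℝ) - n + 1) * ‖xs.comp (evol A m n)‖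
        = ∑ _k ∈ Finset.Icc n m, ‖xs.comp (evol A m n)‖ := by
          rw [Finset.sum_const, nsmul_eq_mul, hcard]
      _ ≤ ∑ k ∈ Finset.Icc n m, ‖xs.comp (evol A m k)‖ * B := by
          refine Finset.sum_le_sum fun k hk => ?_
          obtain ⟨hnk, hkm⟩ := Finset.mem_Icc.mp hk
          rw [evol_comp A hnk hkm, ← ContinuousLinearMap.comp_assoc]
          calc ‖(xs.comp (evol A m k)).comp (evol A k n)‖
              ≤ ‖xs.comp (evol A m k)‖ * ‖evol A k n‖ :=
                ContinuousLinearMap.opNorm_comp_le _ _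
            _ ≤ ‖xs.comp (evol A m k)‖ * B :=
                mul_le_mul_of_nonneg_left (hbound k n hnk) (norm_nonneg _)
      _ = B * ∑ k ∈ Finset.Icc n m, ‖xs.comp (evol A m k)‖ := by
          rw [← Finset.sum_mul, mul_comm]
      _ ≤ B * ∑ k ∈ Finset.range (m + 1), ‖xs.comp (evol A m k)‖ := by
          refine mul_le_mul_of_nonneg_left ?_ hB0.le
          refine Finset.sum_le_sum_of_subset_of_nonneg ?_ fun i _ _ => norm_nonneg _
          intro k hk
          simp only [Finset.mem_Icc, Finset.mem_range] at hk ⊢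
          omega
      _ ≤ B * (B * ‖xs‖) := mul_le_mul_of_nonneg_left (h m xs) hB0.le
      _ = B * B * ‖xs‖ := by ring
  -- operator norm decay
  have hnorm : ∀ n m : ℕ, n ≤ m → ‖evol A m n‖ ≤ B * B / ((m : ℝ) - n + 1) := by
    intro n m hnm
    have hle : (n:ℝ) ≤ m := Nat.cast_le.mpr hnm
    have hpos : (0:ℝ) < (m : ℝ) - n + 1 := by linarith
    refine opNorm_le_of_dual _ _ (by positivity) fun xs => ?_
    rw [div_mul_eq_mul_div, le_div_iff₀ hpos]
    calc ‖xs.comp (evol A m n)‖ * ((m:ℝ) - n + 1)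
        = ((m:ℝ) - n + 1) * ‖xs.comp (evol A m n)‖ := mul_comm _ _
      _ ≤ B * B * ‖xs‖ := hkey n m hnm xs
  -- block length
  set l : ℕ := ⌈Real.exp 1 * (B * B)⌉₊ with hl_def
  have he1 : (1:ℝ) ≤ Real.exp 1 := by
    have := Real.add_one_le_exp (1:ℝ); linarith
  have hl_ge : Real.exp 1 * (B * B) ≤ (l : ℝ) := Nat.le_ceil _
  have hl1 : 1 ≤ l := by
    have : (1:ℝ) ≤ Real.exp 1 * (B * B) := by nlinarith
    have h2 : (1:ℝ) ≤ (l:ℝ) := le_trans this hl_ge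
    exact_mod_cast h2
  have hlpos : (0:ℝ) < l := by exact_mod_cast hl1
  -- one block contracts by e⁻¹
  have hblock : ∀ n : ℕ, ‖evol A (n + l) n‖ ≤ Real.exp (-1) := by
    intro n
    have h1 := hnorm n (n + l) (Nat.le_add_right n l)
    have hc : ((n + l : ℕ) : ℝ) - n + 1 = (l : ℝ) + 1 := by push_cast; ring
    rw [hc] at h1
    refine h1.trans ?_
    rw [div_le_iff₀ (by linarith), Real.exp_neg]
    have hee : (Real.exp 1)⁻¹ * Real.exp 1 = 1 :=
      inv_mul_cancel₀ (Real.exp_pos 1).ne'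
    have hinv : (0:ℝ) < (Real.exp 1)⁻¹ := inv_pos.mpr (Real.exp_pos 1)
    nlinarith [hl_ge, hinv, hee]
  -- q blocks
  have hq : ∀ n q : ℕ, ‖evol A (n + q * l) n‖ ≤ Real.exp (-(q : ℝ)) := by
    intro n q
    induction q with
    | zero =>
      simp only [Nat.zero_eq, Nat.cast_zero, neg_zero, Real.exp_zero, Nat.mul_zero,
        zero_mul, Nat.add_zero, evol_self]
      exact ContinuousLinearMap.norm_id_le
    | succ q ih =>
      have hsplit : evol A (n + (q + 1) * l) n =
          (evol A (n + q * l + l) (n + q * l)) ∘L evol A (n + q * l) n := by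
        rw [show n + (q + 1) * l = n + q * l + l by ring]
        exact evol_comp A (Nat.le_add_right _ _) (Nat.le_add_right _ _)
      rw [hsplit]
      calc ‖(evol A (n + q * l + l) (n + q * l)) ∘L evol A (n + q * l) n‖
          ≤ ‖evol A (n + q * l + l) (n + q * l)‖ * ‖evol A (n + q * l) n‖ :=
            ContinuousLinearMap.opNorm_comp_le _ _
        _ ≤ Real.exp (-1) * Real.exp (-(q : ℝ)) :=
            mul_le_mul (hblock _) ih (norm_nonneg _) (Real.exp_pos _).le
        _ = Real.exp (-((q + 1 : ℕ) : ℝ)) := by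
            rw [← Real.exp_add]; push_cast; ring_nf
  -- conclusion
  refine ⟨B * Real.exp 1, 1 / (l : ℝ), by nlinarith, div_pos one_pos hlpos, ?_⟩
  intro n m hnm x
  set d := m - n with hd_def
  set q := d / l with hq_def
  have hdam : q * l + d % l = d := by
    rw [hq_def, Nat.mul_comm]; exact Nat.div_add_mod d l
  have hrl : d % l < l := Nat.mod_lt _ (by omega)
  have hm : n + q * l ≤ m := by omega
  have hsplit : evol A m n = (evol A m (n + q * l)) ∘L evol A (n + q * l) n :=
    evol_comp A (Nat.le_add_right _ _) hm
  have h1 : ‖evol A m n‖ ≤ B * Real.exp (-(q : ℝ)) := by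
    rw [hsplit]
    calc ‖(evol A m (n + q * l)) ∘L evol A (n + q * l) n‖
        ≤ ‖evol A m (n + q * l)‖ * ‖evol A (n + q * l) n‖ :=
          ContinuousLinearMap.opNorm_comp_le _ _
      _ ≤ B * Real.exp (-(q : ℝ)) :=
          mul_le_mul (hbound m _ hm) (hq n q) (norm_nonneg _) hB0.le
  have hdr : ((m:ℝ) - n) = (d : ℝ) := by
    rw [hd_def, Nat.cast_sub hnm]
  have harith : Real.exp (-(q : ℝ)) ≤
      Real.exp 1 * Real.exp (-(1 / (l : ℝ)) * ((m : ℝ) - n)) := by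
    rw [hdr, ← Real.exp_add, Real.exp_le_exp]
    have hdle : (d : ℝ) ≤ ((q : ℝ) + 1) * l := by
      have hnat : d ≤ q * l + l := by omega
      have h4 : (d : ℝ) ≤ ((q * l + l : ℕ) : ℝ) := Nat.cast_le.mpr hnat
      push_cast at h4; linarith
    have h2 : (d : ℝ) / l ≤ (q : ℝ) + 1 := (div_le_iff₀ hlpos).mpr hdle
    have h3 : -(1 / (l : ℝ)) * d = -((d : ℝ) / l) := by ring
    rw [h3]
    linarith
  calc ‖evol A m n x‖ ≤ ‖evol A m n‖ * ‖x‖ := (evol A m n).le_opNorm x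
    _ ≤ (B * Real.exp (-(q : ℝ))) * ‖x‖ :=
        mul_le_mul_of_nonneg_right h1 (norm_nonneg x)
    _ ≤ (B * (Real.exp 1 * Real.exp (-(1 / (l : ℝ)) * ((m : ℝ) - n)))) * ‖x‖ := by
        refine mul_le_mul_of_nonneg_right ?_ (norm_nonneg x)
        exact mul_le_mul_of_nonneg_left harith hB0.le
    _ = B * Real.exp 1 * Real.exp (-(1 / (l : ℝ)) * ((m : ℝ) - n)) * ‖x‖ := by ring
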